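/- Let n ≥ 1 and k ≥ 0, let z > 0 be real, let a : Fin n → ℂ satisfy Re aᵢ > 0 for every i, and let c₁, …, c_k ∈ ℝⁿ be arbitrary vectors. For q = (q₁,…,q_k) with all qⱼ > 0, the function y ↦ exp(−(Σ_{i} e^{yᵢ} + Σ_{j} qⱼ e^{⟨cⱼ, y⟩})/z) · exp(Σ_{i} aᵢ yᵢ) is integrable on ℝⁿ, and as q tends to 0 in (ℝ_{>0})^k the integral ∫_{ℝⁿ} exp(−(Σ_{i} e^{yᵢ} + Σ_{j} qⱼ e^{⟨cⱼ, y⟩})/z) · exp(Σ_{i} aᵢ yᵢ) dy tends to Π_{i} ( z^{aᵢ} · Γ(aᵢ) ). -/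

import Mathlib

open MeasureTheory Filter Topology

lemma oneD (z : ℝ) (hz : 0 < z) (b : ℂ) (hb : 0 < b.re) :
    Integrable (fun t : ℝ => Complex.exp (-((Real.exp t : ℝ) : ℂ) / z) * Complex.exp (b * t)) ∧
    ∫ t : ℝ, Complex.exp (-((Real.exp t : ℝ) : ℂ) / z) * Complex.exp (b * t)
      = (z : ℂ) ^ b * Complex.Gamma b := by
  have hr : (0:ℝ) < 1 / z := by positivity
  set r : ℝ := 1 / z with hrdef
  set g : ℝ → ℂ := fun x => (x : ℂ) ^ (b - 1) * Complex.exp (-((r : ℂ) * (x : ℝ))) with hg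
  have himg : Real.exp '' Set.univ = Set.Ioi (0:ℝ) := by
    rw [Set.image_univ, Real.range_exp]
  have hderiv : ∀ x ∈ (Set.univ : Set ℝ), HasDerivWithinAt Real.exp (Real.exp x) Set.univ x :=
    fun x _ => (Real.hasDerivAt_exp x).hasDerivWithinAt
  have hinj : Set.InjOn Real.exp Set.univ := Real.exp_injective.injOn
  -- integrability of g on Ioi 0
  have hgi : IntegrableOn g (Set.Ioi (0:ℝ)) := by
    have h0 := Complex.GammaIntegral_convergent hb
    have h1 : IntegrableOn
        (fun x : ℝ => Complex.exp (-((r * x : ℝ) : ℂ)) * ((r * x : ℝ) : ℂ) ^ (b - 1))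
        (Set.Ioi (0:ℝ)) := by
      have := (integrableOn_Ioi_comp_mul_left_iff
        (fun x : ℝ => Complex.exp (-(x : ℂ)) * (x : ℂ) ^ (b - 1)) 0 hr).mpr
        (by simpa using h0)
      simpa using this
    have h2 := h1.const_mul ((r : ℂ) ^ ((1:ℂ) - b))
    refine MeasureTheory.IntegrableOn.congr_fun h2 (fun x hx => ?_) measurableSet_Ioi
    have hxpos : (0:ℝ) < x := hx
    have hrne : (r : ℂ) ≠ 0 := by
      simp only [Ne, Complex.ofReal_eq_zero]; exact hr.ne'
    rw [hg]
    push_cast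
    rw [Complex.mul_cpow_ofReal_nonneg hr.le hxpos.le]
    rw [show ((r:ℂ) ^ ((1:ℂ) - b) * (Complex.exp (-((r:ℂ) * x)) * ((r:ℂ) ^ (b-1) * (x:ℂ) ^ (b-1)))
        = ((r:ℂ) ^ ((1:ℂ) - b) * (r:ℂ) ^ (b-1)) * ((x:ℂ) ^ (b-1) * Complex.exp (-((r:ℂ) * x)))) by ring]
    rw [← Complex.cpow_add _ _ hrne]
    norm_num
  -- pointwise identity
  have hpt : ∀ t : ℝ, |Real.exp t| • g (Real.exp t)
      = Complex.exp (-((Real.exp t : ℝ) : ℂ) / z) * Complex.exp (b * t) := by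
    intro t
    have hx : ((Real.exp t : ℝ) : ℂ) ≠ 0 := by
      simp [Complex.ofReal_eq_zero, (Real.exp_pos t).ne']
    have hlog : Complex.log ((Real.exp t : ℝ) : ℂ) = (t : ℂ) := by
      rw [← Complex.ofReal_log (Real.exp_pos t).le, Real.log_exp]
    rw [abs_of_pos (Real.exp_pos t), hg]
    simp only [Complex.real_smul]
    have h1 : ((Real.exp t : ℝ) : ℂ) * ((Real.exp t : ℝ) : ℂ) ^ (b - 1) = Complex.exp (b * t) := by
      have hsplit : ((Real.exp t : ℝ) : ℂ) ^ b
          = ((Real.exp t : ℝ) : ℂ) ^ (1:ℂ) * ((Real.exp t : ℝ) : ℂ) ^ (b - 1) := by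
        rw [← Complex.cpow_add _ _ hx]; congr 1; ring
      rw [Complex.cpow_one] at hsplit
      rw [← hsplit, Complex.cpow_def_of_ne_zero hx, hlog, mul_comm]
    have h2 : -((r : ℂ) * ((Real.exp t : ℝ) : ℂ)) = -((Real.exp t : ℝ) : ℂ) / z := by
      rw [hrdef]
      push_cast
      field_simp
    calc ((Real.exp t : ℝ) : ℂ) * (((Real.exp t : ℝ) : ℂ) ^ (b - 1)
          * Complex.exp (-((r : ℂ) * ((Real.exp t : ℝ) : ℂ))))
        = (((Real.exp t : ℝ) : ℂ) * ((Real.exp t : ℝ) : ℂ) ^ (b - 1))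
          * Complex.exp (-((r : ℂ) * ((Real.exp t : ℝ) : ℂ))) := by ring
      _ = _ := by rw [h1, h2, mul_comm]
  -- change of variables
  have hint : IntegrableOn (fun t => |Real.exp t| • g (Real.exp t)) Set.univ := by
    rw [← integrableOn_image_iff_integrableOn_abs_deriv_smul MeasurableSet.univ hderiv hinj g,
      himg]
    exact hgi
  have hval : ∫ x in Set.Ioi (0:ℝ), g x = ∫ t, |Real.exp t| • g (Real.exp t) := by
    rw [← himg, integral_image_eq_integral_abs_deriv_smul MeasurableSet.univ hderiv hinj g,
      setIntegral_univ]
  have hgamma : ∫ x in Set.Ioi (0:ℝ), g x = (z : ℂ) ^ b * Complex.Gamma b := by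
    rw [hg]
    have := Complex.integral_cpow_mul_exp_neg_mul_Ioi hb hr
    rw [show ((1:ℂ) / (r:ℝ)) = (z : ℂ) by rw [hrdef]; push_cast; field_simp] at this
    exact this
  constructor
  · have := integrableOn_univ.mp hint
    exact this.congr (Eventually.of_forall hpt)
  · calc ∫ t : ℝ, Complex.exp (-((Real.exp t : ℝ) : ℂ) / z) * Complex.exp (b * t)
        = ∫ t, |Real.exp t| • g (Real.exp t) := by
          exact integral_congr_ae (Eventually.of_forall (fun t => (hpt t).symm))
    _ = (z : ℂ) ^ b * Complex.Gamma b := by rw [← hval, hgamma]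

lemma oneD_real (z : ℝ) (hz : 0 < z) (p : ℝ) (hp : 0 < p) :
    Integrable (fun t : ℝ => Real.exp (-(Real.exp t / z)) * Real.exp (p * t)) := by
  have h := (oneD z hz (p : ℂ) (by simpa using hp)).1.norm
  refine h.congr (Filter.Eventually.of_forall fun t => ?_)
  simp only []
  rw [show -((Real.exp t : ℝ) : ℂ) / z = ((-(Real.exp t / z) : ℝ) : ℂ) by push_cast; ring,
    show ((p:ℂ) * (t:ℂ)) = ((p * t : ℝ) : ℂ) by push_cast; ring,
    ← Complex.ofReal_exp, ← Complex.ofReal_exp, ← Complex.ofReal_mul]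
  rw [Complex.norm_real]
  exact abs_of_pos (by positivity)

/-- Large radius limit of the oscillatory integral of the equivariantly
perturbed superpotential. For `n ≥ 1`, real `z > 0`, `a : Fin n → ℂ` with `Re aᵢ > 0`, and
arbitrary vectors `c₁,…,c_k ∈ ℝⁿ`: for every `q ∈ (ℝ_{>0})^k` the integrand is integrable,
and as `q → 0` in the positive orthant the integral tends to `Πᵢ z^{aᵢ} Γ(aᵢ)`. -/
theorem oscillatory_integral_perturbed_large_radius_limit
    (n k : ℕ) (hn : 1 ≤ n) (z : ℝ) (hz : 0 < z) (a : Fin n → ℂ)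
    (ha : ∀ i, 0 < (a i).re) (c : Fin k → (Fin n → ℝ)) :
    (∀ q : Fin k → ℝ, (∀ j, 0 < q j) →
      Integrable (fun y : Fin n → ℝ =>
        Complex.exp
            (-(((∑ i, Real.exp (y i)) + ∑ j, q j * Real.exp (∑ i, c j i * y i) : ℝ) : ℂ) /
              (z : ℂ)) *
          Complex.exp (∑ i, a i * (y i : ℂ)))) ∧
    Tendsto
      (fun q : Fin k → ℝ => ∫ y : Fin n → ℝ,
        Complex.exp
            (-(((∑ i, Real.exp (y i)) + ∑ j, q j * Real.exp (∑ i, c j i * y i) : ℝ) : ℂ) /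
              (z : ℂ)) *
          Complex.exp (∑ i, a i * (y i : ℂ)))
      (𝓝[{q : Fin k → ℝ | ∀ j, 0 < q j}] 0)
      (𝓝 (∏ i, ((z : ℂ) ^ (a i) * Complex.Gamma (a i)))) := by
  -- the integrand as a function of q and y
  set F : (Fin k → ℝ) → (Fin n → ℝ) → ℂ := fun q y =>
    Complex.exp
        (-(((∑ i, Real.exp (y i)) + ∑ j, q j * Real.exp (∑ i, c j i * y i) : ℝ) : ℂ) /
          (z : ℂ)) *
      Complex.exp (∑ i, a i * (y i : ℂ)) with hF
  -- the dominating function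
  set g₀ : (Fin n → ℝ) → ℝ := fun y =>
    ∏ i, (Real.exp (-(Real.exp (y i) / z)) * Real.exp ((a i).re * y i)) with hg₀
  have hg₀int : Integrable g₀ :=
    Integrable.fintype_prod (f := fun i t => Real.exp (-(Real.exp t / z)) * Real.exp ((a i).re * t))
      (fun i => oneD_real z hz _ (ha i))
  -- norm of the integrand
  have normF : ∀ (q : Fin k → ℝ) (y : Fin n → ℝ), ‖F q y‖ =
      Real.exp (-(((∑ i, Real.exp (y i)) + ∑ j, q j * Real.exp (∑ i, c j i * y i)) / z)) *
        Real.exp (∑ i, (a i).re * y i) := by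
    intro q y
    rw [hF]
    simp only []
    rw [norm_mul]
    congr 1
    · rw [show -(((∑ i, Real.exp (y i)) + ∑ j, q j * Real.exp (∑ i, c j i * y i) : ℝ) : ℂ) / (z:ℂ)
          = ((-(((∑ i, Real.exp (y i)) + ∑ j, q j * Real.exp (∑ i, c j i * y i)) / z) : ℝ) : ℂ)
          by push_cast; ring, ← Complex.ofReal_exp, Complex.norm_real]
      exact abs_of_pos (Real.exp_pos _)
    · rw [Complex.norm_exp, Complex.re_sum]
      congr 1
      refine Finset.sum_congr rfl fun i _ => ?_
      simp [Complex.mul_re]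
  -- the bound
  have hbound : ∀ (q : Fin k → ℝ), (∀ j, 0 ≤ q j) → ∀ y, ‖F q y‖ ≤ g₀ y := by
    intro q hq y
    rw [normF, hg₀]
    simp only []
    rw [Finset.prod_mul_distrib, ← Real.exp_sum, ← Real.exp_sum]
    have hsum : ∑ i, -(Real.exp (y i) / z) = -((∑ i, Real.exp (y i)) / z) := by
      rw [Finset.sum_div, ← Finset.sum_neg_distrib]
    rw [hsum]
    have hP : (0:ℝ) ≤ ∑ j, q j * Real.exp (∑ i, c j i * y i) :=
      Finset.sum_nonneg fun j _ => mul_nonneg (hq j) (Real.exp_pos _).le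
    gcongr
    linarith
  -- continuity in y
  have contY : ∀ q : Fin k → ℝ, Continuous (F q) := by
    intro q
    rw [hF]
    fun_prop
  -- part 1 : integrability
  have hIntegrable : ∀ q : Fin k → ℝ, (∀ j, 0 ≤ q j) → Integrable (F q) := by
    intro q hq
    exact hg₀int.mono' (contY q).aestronglyMeasurable
      (Filter.Eventually.of_forall (hbound q hq))
  -- the limit integrand
  set F₀ : (Fin n → ℝ) → ℂ := fun y =>
    Complex.exp (-(((∑ i, Real.exp (y i) : ℝ)) : ℂ) / (z : ℂ)) *
      Complex.exp (∑ i, a i * (y i : ℂ)) with hF₀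
  have hF0eq : ∀ y, F 0 y = F₀ y := by
    intro y
    rw [hF, hF₀]
    simp
  -- value of the limit integral
  have hval : ∫ y : Fin n → ℝ, F₀ y = ∏ i, ((z : ℂ) ^ (a i) * Complex.Gamma (a i)) := by
    have hprod : ∀ y : Fin n → ℝ, F₀ y =
        ∏ i, (Complex.exp (-((Real.exp (y i) : ℝ) : ℂ) / z) * Complex.exp (a i * (y i : ℂ))) := by
      intro y
      rw [hF₀]
      simp only []
      rw [Finset.prod_mul_distrib, ← Complex.exp_sum, ← Complex.exp_sum]
      congr 2
      rw [show ∑ i, -((Real.exp (y i) : ℝ) : ℂ) / (z:ℂ)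
          = -(((∑ i, Real.exp (y i) : ℝ)) : ℂ) / (z : ℂ) by
        push_cast
        simp [neg_div, Finset.sum_div, ← Finset.sum_neg_distrib]]
    calc ∫ y : Fin n → ℝ, F₀ y
        = ∫ y : Fin n → ℝ, ∏ i,
            (Complex.exp (-((Real.exp (y i) : ℝ) : ℂ) / z) * Complex.exp (a i * (y i : ℂ))) :=
          integral_congr_ae (Filter.Eventually.of_forall fun y => hprod y)
      _ = ∏ i, ∫ t : ℝ, Complex.exp (-((Real.exp t : ℝ) : ℂ) / z) * Complex.exp (a i * (t : ℂ)) :=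
          MeasureTheory.integral_fintype_prod_eq_prod
            (fun i t => Complex.exp (-((Real.exp t : ℝ) : ℂ) / z) * Complex.exp (a i * (t : ℂ)))
      _ = ∏ i, ((z : ℂ) ^ (a i) * Complex.Gamma (a i)) :=
          Finset.prod_congr rfl fun i _ => (oneD z hz (a i) (ha i)).2
  constructor
  · intro q hq
    exact hIntegrable q (fun j => (hq j).le)
  · rw [← hval]
    refine MeasureTheory.tendsto_integral_filter_of_dominated_convergence g₀
      ?_ ?_ hg₀int ?_
    · exact Filter.Eventually.of_forall fun q => (contY q).aestronglyMeasurable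
    · filter_upwards [eventually_mem_nhdsWithin] with q hq
      exact Filter.Eventually.of_forall (hbound q fun j => (hq j).le)
    · refine Filter.Eventually.of_forall fun y => ?_
      have hc : Continuous (fun q : Fin k → ℝ => F q y) := by
        rw [hF]
        fun_prop
      have := (hc.tendsto 0).mono_left
        (nhdsWithin_le_nhds (s := {q : Fin k → ℝ | ∀ j, 0 < q j}))
      rwa [hF0eq y] at this
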